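/- arXiv:1309.2987 — 4 statements merged into one kernel-verified Lean document; each statement's English description precedes it below -/
import Mathlib

section
/- Let f : {±1}^n → {0,1} be a function and let p = E_{x uniform on {±1}^n}[f(x)]. Then E[f(x) · Σ_{i=1}^n x_i] ≤ C · p · sqrt(n · log(1/p)) for some absolute constant C (valid for all 0 < p ≤ 1/2, say). -/
open Real Finset

noncomputable def sgn (b : Bool) : ℝ := if b then 1 else -1

def flip' {n : ℕ} (x : Fin n → Bool) (i : Fin n) : Fin n → Bool :=
  Function.update x i (!x i)

noncomputable def expect {n : ℕ} (f : (Fin n → Bool) → ℝ) : ℝ :=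
  (∑ x : Fin n → Bool, f x) / 2 ^ n

noncomputable def avgSens {n : ℕ} (f : (Fin n → Bool) → ℝ) : ℝ :=
  (∑ x : Fin n → Bool, ∑ i : Fin n,
    if f x ≠ f (flip' x i) then (1 : ℝ) else 0) / 2 ^ n

/-- `f` is monotone nondecreasing in coordinate `i` (where `true ↦ +1`, `false ↦ -1`). -/
def MonoIn {n : ℕ} (f : (Fin n → Bool) → ℝ) (i : Fin n) : Prop :=
  ∀ x, f (Function.update x i false) ≤ f (Function.update x i true)

/-- `f` is monotone nonincreasing in coordinate `i`. -/
def AntiIn {n : ℕ} (f : (Fin n → Bool) → ℝ) (i : Fin n) : Prop :=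
  ∀ x, f (Function.update x i true) ≤ f (Function.update x i false)

def Unate {n : ℕ} (f : (Fin n → Bool) → ℝ) : Prop :=
  ∀ i, MonoIn f i ∨ AntiIn f i

lemma sum_exp_sgn (n : ℕ) (l : ℝ) :
    ∑ x : Fin n → Bool, Real.exp (l * ∑ i, sgn (x i)) = (Real.exp l + Real.exp (-l)) ^ n := by
  have h : ∀ x : Fin n → Bool, Real.exp (l * ∑ i, sgn (x i)) = ∏ i, Real.exp (l * sgn (x i)) := by
    intro x
    rw [Finset.mul_sum, Real.exp_sum]
  simp_rw [h]
  rw [← Fintype.piFinset_univ,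
    ← Finset.prod_univ_sum (fun _ : Fin n => (univ : Finset Bool)) (fun _ b => Real.exp (l * sgn b))]
  simp [sgn, mul_comm]

set_option maxHeartbeats 1000000 in
theorem stmt_0 :
    ∃ C : ℝ, 0 < C ∧ ∀ (n : ℕ) (f : (Fin n → Bool) → ℝ),
      (∀ x, f x = 0 ∨ f x = 1) →
      0 < expect f → expect f ≤ 1 / 2 →
      expect (fun x => f x * ∑ i : Fin n, sgn (x i)) ≤
        C * expect f * Real.sqrt (n * Real.log (1 / expect f)) := by
  refine ⟨3, by norm_num, ?_⟩
  intro n f hf01 hp0 hp2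
  set p := _root_.expect f with hpdef
  set L := Real.log (1 / p) with hLdef
  have hp1 : (2:ℝ) ≤ 1 / p := by
    rw [le_div_iff₀ hp0]; linarith
  have hL2 : Real.log 2 ≤ L := Real.log_le_log (by norm_num) hp1
  have hlog2 : (0.6931471803 : ℝ) < Real.log 2 := Real.log_two_gt_d9
  have hL0 : 0 < L := lt_of_lt_of_le (Real.log_pos (by norm_num)) hL2
  rcases Nat.eq_zero_or_pos n with hn | hn
  · subst hn
    have h1 : _root_.expect (fun x => f x * ∑ i : Fin 0, sgn (x i)) = 0 := by
      simp [_root_.expect]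
    rw [h1]
    push_cast
    rw [zero_mul, Real.sqrt_zero, mul_zero]
  -- main case
  have hn0 : (0:ℝ) < n := by exact_mod_cast hn
  set l := Real.sqrt (2 * L / n) with hldef
  have hl0 : 0 < l := Real.sqrt_pos.mpr (by positivity)
  have hlsq : l ^ 2 = 2 * L / n := Real.sq_sqrt (by positivity)
  set t := l * n with htdef
  have hlt : l * t = 2 * L := by
    rw [htdef, ← mul_assoc, ← sq, hlsq]; field_simp
  set c := Real.exp (-(l*t) - 1) / l with hcdef
  have hc0 : 0 < c := by positivity
  -- pointwise bound
  have key : ∀ x : Fin n → Bool,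
      f x * ∑ i, sgn (x i) ≤
        f x * t + c * Real.exp (l * ∑ i, sgn (x i)) := by
    intro x
    set S := ∑ i, sgn (x i) with hS
    have hexp : Real.exp (-(l*t) - 1) * Real.exp (l * S) = Real.exp (l * (S - t) - 1) := by
      rw [← Real.exp_add]; ring_nf
    have hbound : l * (S - t) ≤ Real.exp (l * (S - t) - 1) := by
      have := Real.add_one_le_exp (l * (S - t) - 1)
      linarith
    rcases hf01 x with h0 | h1
    · rw [h0]
      simp only [zero_mul, zero_add]
      positivity
    · rw [h1]
      simp only [one_mul]
      rw [hcdef, div_mul_eq_mul_div, hexp]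
      have h2 : S - t ≤ Real.exp (l * (S - t) - 1) / l := by
        rw [le_div_iff₀ hl0]
        nlinarith [hbound]
      linarith
  -- sum the pointwise bound
  set B := Real.exp l + Real.exp (-l) with hBdef
  have hsum : _root_.expect (fun x => f x * ∑ i, sgn (x i)) ≤
      (t * (∑ x : Fin n → Bool, f x) + c * B ^ n) / 2 ^ n := by
    simp only [_root_.expect]
    rw [div_le_div_iff_of_pos_right (by positivity)]
    calc ∑ x : Fin n → Bool, f x * ∑ i, sgn (x i)
        ≤ ∑ x : Fin n → Bool, (f x * t + c * Real.exp (l * ∑ i, sgn (x i))) :=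
          Finset.sum_le_sum fun x _ => key x
      _ = t * (∑ x : Fin n → Bool, f x) + c * B ^ n := by
          rw [Finset.sum_add_distrib, ← Finset.sum_mul, ← Finset.mul_sum, sum_exp_sgn]
          ring
  have hexpand : (t * (∑ x : Fin n → Bool, f x) + c * B ^ n) / 2 ^ n
      = t * p + c * (B ^ n / 2 ^ n) := by
    rw [hpdef]; simp only [_root_.expect]; ring
  -- bound B^n / 2^n ≤ exp L
  have hB : B ^ n / 2 ^ n ≤ Real.exp L := by
    have h1 : B ≤ 2 * Real.exp (l ^ 2 / 2) := by
      have := Real.cosh_le_exp_half_sq l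
      rw [Real.cosh_eq] at this
      rw [hBdef]; linarith
    have h2 : B ^ n ≤ (2 * Real.exp (l ^ 2 / 2)) ^ n :=
      pow_le_pow_left₀ (by positivity) h1 n
    have h3 : (2 * Real.exp (l ^ 2 / 2)) ^ n = 2 ^ n * Real.exp (l ^ 2 / 2 * n) := by
      rw [mul_pow, ← Real.exp_nat_mul]; ring_nf
    have h4 : l ^ 2 / 2 * n = L := by
      rw [hlsq]; field_simp
    rw [div_le_iff₀ (by positivity : (0:ℝ) < (2:ℝ) ^ n), ← h4, mul_comm, ← h3]
    exact h2
  have hcL : c * Real.exp L = p * Real.exp (-1) / l := by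
    rw [hcdef, div_mul_eq_mul_div, ← Real.exp_add, hlt]
    have h5 : -(2 * L) - 1 + L = -L + -1 := by ring
    rw [h5, Real.exp_add]
    have h6 : Real.exp (-L) = p := by
      rw [hLdef, one_div, Real.log_inv, neg_neg, Real.exp_log hp0]
    rw [h6]
  -- assemble
  set s := Real.sqrt (n * L) with hsdef
  have hs0 : 0 < s := Real.sqrt_pos.mpr (by positivity)
  have hls : l * s = Real.sqrt 2 * L := by
    rw [hldef, hsdef, ← Real.sqrt_mul (by positivity : (0:ℝ) ≤ 2 * L / n)]
    have h7 : 2 * L / n * (n * L) = 2 * L ^ 2 := by field_simp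
    rw [h7, Real.sqrt_mul (by norm_num : (0:ℝ) ≤ 2), Real.sqrt_sq hL0.le]
  have hsqrt2 : (1.4:ℝ) ≤ Real.sqrt 2 ∧ Real.sqrt 2 ≤ (1.5:ℝ) := by
    constructor <;> nlinarith [Real.sq_sqrt (by norm_num : (0:ℝ) ≤ 2), Real.sqrt_nonneg 2]
  have he : Real.exp (-1) ≤ 1/2 := by
    rw [Real.exp_neg]
    rw [inv_le_comm₀ (Real.exp_pos 1) (by norm_num)]
    linarith [Real.exp_one_gt_d9]
  -- scalar inequality
  have hscal : 2 * L + Real.exp (-1) ≤ 3 * Real.sqrt 2 * L := by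
    nlinarith [hsqrt2.1, hL2, hlog2, he]
  calc _root_.expect (fun x => f x * ∑ i, sgn (x i))
      ≤ (t * (∑ x : Fin n → Bool, f x) + c * B ^ n) / 2 ^ n := hsum
    _ = t * p + c * (B ^ n / 2 ^ n) := hexpand
    _ ≤ t * p + c * Real.exp L := by
        have := mul_le_mul_of_nonneg_left hB hc0.le
        linarith
    _ = t * p + p * Real.exp (-1) / l := by rw [hcL]
    _ ≤ 3 * p * s := by
        rw [← mul_le_mul_iff_of_pos_right hl0]
        have e1 : (t * p + p * Real.exp (-1) / l) * l = l * t * p + p * Real.exp (-1) := by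
          field_simp
        rw [e1, hlt]
        have e2 : 3 * p * s * l = 3 * p * (Real.sqrt 2 * L) := by
          rw [← hls]; ring
        rw [e2]
        nlinarith [mul_le_mul_of_nonneg_left hscal hp0.le]
end

section
/- Let f_m : {±1}^n → {0,1} be unate (for each coordinate i, f_m is either nondecreasing or nonincreasing in x_i), let F_{m-1} : {±1}^n → {0,1} be arbitrary, and let F_m = F_{m-1} ∨ f_m. Set S_m = F_m − F_{m-1} and p_m = E[S_m(x)]. Then as(F_m) − as(F_{m-1}) ≤ C · p_m · sqrt(n · log(1/p_m)) for an absolute constant C. -/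
open Real Finset

lemma flip'_apply {n : ℕ} (x : Fin n → Bool) (i : Fin n) : flip' x i i = !x i := by
  simp [flip']

lemma flip'_flip' {n : ℕ} (x : Fin n → Bool) (i : Fin n) : flip' (flip' x i) i = x := by
  simp [flip', Function.update_idem]

lemma sum_flip {n : ℕ} (i : Fin n) (F : (Fin n → Bool) → ℝ) :
    ∑ x : Fin n → Bool, F (flip' x i) = ∑ x : Fin n → Bool, F x :=
  Fintype.sum_bijective (fun x => flip' x i)
    (Function.Involutive.bijective (fun x => flip'_flip' x i)) _ _ (fun _ => rfl)

lemma edgeKey (f0 f1 P0 P1 : ℝ)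
    (hf0 : f0 = 0 ∨ f0 = 1) (hf1 : f1 = 0 ∨ f1 = 1)
    (hP0 : P0 = 0 ∨ P0 = 1) (hP1 : P1 = 0 ∨ P1 = 1) (hle : f0 ≤ f1) :
    ((if max P1 f1 ≠ max P0 f0 then (1:ℝ) else 0) - (if P1 ≠ P0 then (1:ℝ) else 0))
      ≤ (max P1 f1 - P1) - (max P0 f0 - P0) := by
  rcases hf0 with h|h <;> rcases hf1 with h1|h1 <;> rcases hP0 with h2|h2 <;>
    rcases hP1 with h3|h3 <;> subst h <;> subst h1 <;> subst h2 <;> subst h3 <;>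
    norm_num at hle <;> norm_num [max_def]

set_option maxHeartbeats 2000000 in
lemma scalar_core (p W N : ℝ) (hp : 0 < p) (hp1 : p ≤ 1) (hN0 : 0 < N) (hWpos : 0 < W)
    (H : ∀ t lam : ℝ, 0 < t → 0 < lam →
      W * N ≤ t * (p * N)
        + Real.exp (-(lam * t)) / (Real.exp 1 * lam) * (N * Real.exp (lam ^ 2 * W / 2))) :
    Real.sqrt W ≤ 2 * p * Real.sqrt (1 - Real.log p) := by
  obtain ⟨L, hLd⟩ : ∃ L : ℝ, L = 1 - Real.log p := ⟨_, rfl⟩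
  have hL1 : 1 ≤ L := by
    have := Real.log_nonpos hp.le hp1; rw [hLd]; linarith
  obtain ⟨s, hsd⟩ : ∃ s : ℝ, s = Real.sqrt W := ⟨_, rfl⟩
  have hW0 : (0:ℝ) ≤ W := hWpos.le
  have hs0 : 0 < s := hsd ▸ Real.sqrt_pos.2 hWpos
  have hs2 : s ^ 2 = W := by rw [hsd]; exact Real.sq_sqrt hW0
  obtain ⟨t, htd⟩ : ∃ t : ℝ, t = s * Real.sqrt (2 * L) := ⟨_, rfl⟩
  have hsqrt2 : (1:ℝ) ≤ Real.sqrt 2 := by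
    rw [show (1:ℝ) = Real.sqrt 1 by simp]
    exact Real.sqrt_le_sqrt (by norm_num)
  have hsqrt2L : Real.sqrt 2 ≤ Real.sqrt (2 * L) :=
    Real.sqrt_le_sqrt (by nlinarith)
  have hst : s ≤ t := by rw [htd]; nlinarith [Real.sqrt_nonneg (2 * L)]
  have ht0 : 0 < t := lt_of_lt_of_le hs0 hst
  have ht2 : t ^ 2 = W * (2 * L) := by
    rw [htd, mul_pow, Real.sq_sqrt (by linarith : (0:ℝ) ≤ 2 * L), hs2]
  obtain ⟨lam, hlamd⟩ : ∃ lam : ℝ, lam = t / W := ⟨_, rfl⟩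
  have hlam0 : 0 < lam := hlamd ▸ div_pos ht0 hWpos
  have hWN := H t lam ht0 hlam0
  have hlamt : lam * t = 2 * L := by
    rw [hlamd, div_mul_eq_mul_div, ← sq, ht2, mul_comm W (2 * L), mul_div_assoc,
      div_self (ne_of_gt hWpos), mul_one]
  have hlam2W : lam ^ 2 * W / 2 = L := by
    rw [hlamd, div_pow, ht2]
    field_simp
  have hexpL : Real.exp (-L) = p / Real.exp 1 := by
    have h : -L = Real.log p - 1 := by rw [hLd]; ring
    rw [h, Real.exp_sub, Real.exp_log hp]
  have h1 : Real.exp (-(2 * L)) = p / Real.exp 1 / Real.exp L := by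
    rw [eq_div_iff (Real.exp_ne_zero L), show Real.exp (-(2 * L)) * Real.exp L
      = Real.exp (-L) by rw [← Real.exp_add]; congr 1; ring, hexpL]
  have htail : Real.exp (-(lam * t)) / (Real.exp 1 * lam) * (N * Real.exp (lam ^ 2 * W / 2))
      = p * W / (Real.exp 1 * Real.exp 1 * t) * N := by
    rw [hlamt, hlam2W, hlamd, h1]
    have hWne : W ≠ 0 := ne_of_gt hWpos
    have htne : t ≠ 0 := ne_of_gt ht0
    field_simp
  have he2 : (2:ℝ) ≤ Real.exp 1 := by
    have := Real.add_one_le_exp (1:ℝ); linarith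
  have htail2 : p * W / (Real.exp 1 * Real.exp 1 * t) ≤ p * s / 4 := by
    have hd : W / t ≤ s := by
      rw [div_le_iff₀ ht0, ← hs2]
      nlinarith
    have h2 : (4:ℝ) ≤ Real.exp 1 * Real.exp 1 := by nlinarith
    have h3 : p * W / (Real.exp 1 * Real.exp 1 * t) = p * (W / t) / (Real.exp 1 * Real.exp 1) := by
      ring
    rw [h3]
    have ha0 : 0 ≤ p * (W / t) := mul_nonneg hp.le (div_nonneg hW0 ht0.le)
    have h5 : p * (W / t) / (Real.exp 1 * Real.exp 1) ≤ p * (W / t) / 4 :=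
      div_le_div_of_nonneg_left ha0 (by norm_num) h2
    have h4 : p * (W / t) ≤ p * s := mul_le_mul_of_nonneg_left hd hp.le
    calc p * (W / t) / (Real.exp 1 * Real.exp 1) ≤ p * (W / t) / 4 := h5
      _ ≤ p * s / 4 := by linarith
  have hWle : W ≤ p * t + p * s / 4 := by
    rw [htail] at hWN
    have h6 : W * N ≤ (t * p + p * s / 4) * N := by
      have := mul_le_mul_of_nonneg_right htail2 hN0.le
      rw [add_mul]
      nlinarith
    have h7 : W ≤ t * p + p * s / 4 := le_of_mul_le_mul_right (by linarith) hN0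
    linarith
  have hsqrtL : 1 ≤ Real.sqrt L := by
    rw [show (1:ℝ) = Real.sqrt 1 by simp]
    exact Real.sqrt_le_sqrt hL1
  have hsplit : Real.sqrt (2 * L) ≤ (3 / 2) * Real.sqrt L := by
    rw [Real.sqrt_mul (by norm_num : (0:ℝ) ≤ 2)]
    have h32 : Real.sqrt 2 ≤ 3 / 2 := by
      have := Real.sq_sqrt (by norm_num : (0:ℝ) ≤ 2)
      nlinarith [Real.sqrt_nonneg 2]
    exact mul_le_mul_of_nonneg_right h32 (Real.sqrt_nonneg L)
  have h9 : s * s ≤ p * t + p * s / 4 := by nlinarith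
  have h10 : t ≤ (3 / 2) * Real.sqrt L * s := by
    calc t = s * Real.sqrt (2 * L) := htd
      _ ≤ s * ((3 / 2) * Real.sqrt L) := mul_le_mul_of_nonneg_left hsplit hs0.le
      _ = (3 / 2) * Real.sqrt L * s := by ring
  have h12 : p * t ≤ p * ((3 / 2) * Real.sqrt L * s) := mul_le_mul_of_nonneg_left h10 hp.le
  have h13 : 0 ≤ p * s * (Real.sqrt L - 1) :=
    mul_nonneg (mul_nonneg hp.le hs0.le) (by linarith)
  have h14 : s * s ≤ (2 * p * Real.sqrt L) * s := by nlinarith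
  have hfinal : s ≤ 2 * p * Real.sqrt L := le_of_mul_le_mul_right h14 hs0
  rw [hsd, hLd] at hfinal
  exact hfinal

set_option maxHeartbeats 1000000 in
lemma level1 {n : ℕ} (σ : Fin n → Bool) (a : (Fin n → Bool) → ℝ)
    (ha : ∀ x, a x = 0 ∨ a x = 1)
    (hp : 0 < (∑ x, a x) / 2 ^ n) :
    Real.sqrt (∑ i, ((∑ x, a x * (if x i = σ i then (1:ℝ) else -1)) / 2 ^ n) ^ 2)
      ≤ 2 * ((∑ x, a x) / 2 ^ n) *
        Real.sqrt (1 - Real.log ((∑ x, a x) / 2 ^ n)) := by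
  classical
  set N : ℝ := 2 ^ n with hN
  have hN0 : (0:ℝ) < N := by positivity
  set χ : Fin n → (Fin n → Bool) → ℝ := fun i x => if x i = σ i then 1 else -1 with hχ
  set p : ℝ := (∑ x, a x) / N with hpd
  set ah : Fin n → ℝ := fun i => (∑ x, a x * χ i x) / N with hahd
  set W : ℝ := ∑ i, ah i ^ 2 with hWd
  show Real.sqrt W ≤ 2 * p * Real.sqrt (1 - Real.log p)
  have hp1 : p ≤ 1 := by
    rw [hpd, div_le_one hN0]
    calc ∑ x, a x ≤ ∑ _x : Fin n → Bool, (1:ℝ) :=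
          Finset.sum_le_sum (fun x _ => by rcases ha x with h|h <;> simp [h])
      _ = N := by simp [hN, Fintype.card_fun]
  have hW0 : 0 ≤ W := Finset.sum_nonneg (fun i _ => sq_nonneg _)
  rcases eq_or_lt_of_le hW0 with hW | hWpos
  · rw [← hW, Real.sqrt_zero]; positivity
  set ℓ : (Fin n → Bool) → ℝ := fun x => ∑ i, ah i * χ i x with hℓd
  have hSi : ∀ i, ∑ x, a x * χ i x = ah i * N := by
    intro i
    have h : ah i = (∑ x, a x * χ i x) / N := by rw [hahd]
    rw [h, div_mul_cancel₀ _ (ne_of_gt hN0)]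
  have hi : ∑ x, a x * ℓ x = W * N := by
    calc ∑ x, a x * ℓ x = ∑ x, ∑ i, ah i * (a x * χ i x) := by
          refine Finset.sum_congr rfl (fun x _ => ?_)
          rw [hℓd, Finset.mul_sum]
          exact Finset.sum_congr rfl (fun i _ => by ring)
      _ = ∑ i, ∑ x, ah i * (a x * χ i x) := Finset.sum_comm
      _ = ∑ i, ah i * (ah i * N) := by
          refine Finset.sum_congr rfl (fun i _ => ?_)
          rw [← Finset.mul_sum, hSi i]
      _ = W * N := by rw [hWd, Finset.sum_mul]; exact Finset.sum_congr rfl (fun i _ => by ring)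
  have H : ∀ t lam : ℝ, 0 < t → 0 < lam →
      W * N ≤ t * (p * N)
        + Real.exp (-(lam * t)) / (Real.exp 1 * lam) * (N * Real.exp (lam ^ 2 * W / 2)) := by
    intro t lam ht0 hlam0
    have hkey : ∀ u : ℝ, u ≤ t + Real.exp (lam * (u - t)) / (Real.exp 1 * lam) := by
      intro u
      have h1 : lam * (u - t) ≤ Real.exp (lam * (u - t)) / Real.exp 1 := by
        have h2 := Real.add_one_le_exp (lam * (u - t) - 1)
        have h3 : Real.exp (lam * (u - t) - 1) = Real.exp (lam * (u - t)) / Real.exp 1 :=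
          Real.exp_sub _ _
        linarith [h3 ▸ h2]
      rw [le_div_iff₀ (Real.exp_pos 1)] at h1
      have h4 : u - t ≤ Real.exp (lam * (u - t)) / (Real.exp 1 * lam) := by
        rw [le_div_iff₀ (by positivity : (0:ℝ) < Real.exp 1 * lam)]
        nlinarith [h1]
      linarith
    have hpt : ∀ x, a x * ℓ x ≤ a x * t
        + Real.exp (-(lam * t)) / (Real.exp 1 * lam) * Real.exp (lam * ℓ x) := by
      intro x
      have hrw : Real.exp (-(lam * t)) / (Real.exp 1 * lam) * Real.exp (lam * ℓ x)
          = Real.exp (lam * (ℓ x - t)) / (Real.exp 1 * lam) := by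
        rw [mul_sub, sub_eq_add_neg, Real.exp_add]
        ring
      rw [hrw]
      rcases ha x with h|h
      · rw [h]; simp; positivity
      · rw [h]; simpa using hkey (ℓ x)
    have hMGF : ∑ x, Real.exp (lam * ℓ x) ≤ N * Real.exp (lam ^ 2 * W / 2) := by
      have hfac : ∀ x : Fin n → Bool,
          Real.exp (lam * ℓ x) = ∏ i, Real.exp (lam * ah i * χ i x) := by
        intro x
        rw [← Real.exp_sum]
        congr 1
        rw [hℓd, Finset.mul_sum]
        exact Finset.sum_congr rfl (fun i _ => by ring)
      have hswap : ∑ x : Fin n → Bool, ∏ i, Real.exp (lam * ah i * χ i x)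
          = ∏ i, (Real.exp (lam * ah i) + Real.exp (-(lam * ah i))) := by
        have h := Finset.sum_prod_piFinset (univ : Finset Bool)
          (fun i b => Real.exp (lam * ah i * (if b = σ i then (1:ℝ) else -1)))
        rw [Fintype.piFinset_univ] at h
        rw [h]
        refine Finset.prod_congr rfl (fun i _ => ?_)
        rw [Fintype.sum_bool]
        cases hσi : σ i <;> simp [mul_neg_one, mul_one] <;> ring
      calc ∑ x, Real.exp (lam * ℓ x)
          = ∏ i, (Real.exp (lam * ah i) + Real.exp (-(lam * ah i))) := by
            rw [Finset.sum_congr rfl (fun x _ => hfac x), hswap]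
        _ ≤ ∏ i, 2 * Real.exp ((lam * ah i) ^ 2 / 2) := by
            refine Finset.prod_le_prod (fun i _ => by positivity) (fun i _ => ?_)
            have hc := Real.cosh_le_exp_half_sq (lam * ah i)
            rw [Real.cosh_eq] at hc
            linarith
        _ = N * Real.exp (lam ^ 2 * W / 2) := by
            rw [Finset.prod_mul_distrib, Finset.prod_const, card_univ, Fintype.card_fin,
              ← Real.exp_sum]
            have hsum : ∑ i, (lam * ah i) ^ 2 / 2 = lam ^ 2 * W / 2 := by
              rw [← Finset.sum_div, hWd, Finset.mul_sum]
              congr 1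
              exact Finset.sum_congr rfl (fun i _ => by ring)
            rw [hsum, hN]
    have h1 : ∑ x, a x * ℓ x ≤ ∑ x, (a x * t
        + Real.exp (-(lam * t)) / (Real.exp 1 * lam) * Real.exp (lam * ℓ x)) :=
      Finset.sum_le_sum (fun x _ => hpt x)
    rw [hi] at h1
    rw [Finset.sum_add_distrib, ← Finset.sum_mul, ← Finset.mul_sum] at h1
    have h2 : (∑ x, a x) = p * N := by
      rw [hpd, div_mul_cancel₀ _ (ne_of_gt hN0)]
    have h3 : Real.exp (-(lam * t)) / (Real.exp 1 * lam) * (∑ x, Real.exp (lam * ℓ x))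
        ≤ Real.exp (-(lam * t)) / (Real.exp 1 * lam) * (N * Real.exp (lam ^ 2 * W / 2)) :=
      mul_le_mul_of_nonneg_left hMGF (by positivity)
    rw [h2] at h1
    have h4 : p * N * t = t * (p * N) := by ring
    linarith [h4 ▸ h1]
  exact scalar_core p W N hp hp1 hN0 hWpos H

set_option maxHeartbeats 2000000 in
theorem stmt_4 :
    ∃ C : ℝ, 0 < C ∧ ∀ (n : ℕ) (fm Fprev Fm : (Fin n → Bool) → ℝ),
      (∀ x, fm x = 0 ∨ fm x = 1) → (∀ x, Fprev x = 0 ∨ Fprev x = 1) →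
      Unate fm → (∀ x, Fm x = max (Fprev x) (fm x)) →
      avgSens Fm - avgSens Fprev ≤
        C * expect (fun x => Fm x - Fprev x) *
          Real.sqrt (n * Real.log (1 / expect (fun x => Fm x - Fprev x))) := by
  classical
  refine ⟨100, by norm_num, ?_⟩
  intro n fm Fprev Fm hfm hFp hU hFmx
  obtain ⟨σ, hσ⟩ : ∃ σ : Fin n → Bool, ∀ (i : Fin n) (x : Fin n → Bool),
      fm (Function.update x i (!σ i)) ≤ fm (Function.update x i (σ i)) := by
    refine ⟨fun i => if MonoIn fm i then true else false, fun i x => ?_⟩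
    by_cases h : MonoIn fm i
    · simp only [if_pos h, Bool.not_true]; exact h x
    · have h2 : AntiIn fm i := (hU i).resolve_left h
      simp only [if_neg h, Bool.not_false]; exact h2 x
  set a : (Fin n → Bool) → ℝ := fun x => Fm x - Fprev x with hadef
  have ha01 : ∀ x, a x = 0 ∨ a x = 1 := by
    intro x
    rcases hfm x with h|h <;> rcases hFp x with h2|h2 <;>
      simp [hadef, hFmx x, h, h2, max_def] <;> norm_num
  have ha0 : ∀ x, 0 ≤ a x := by
    intro x; rcases ha01 x with h|h <;> rw [h] <;> norm_num
  set p : ℝ := expect (fun x => Fm x - Fprev x) with hpdef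
  have hpeq : p = (∑ x, a x) / 2 ^ n := rfl
  have hN0 : (0:ℝ) < 2 ^ n := by positivity
  have hp0 : 0 ≤ p := by
    rw [hpeq]
    exact div_nonneg (Finset.sum_nonneg fun x _ => ha0 x) hN0.le
  have hp1 : p ≤ 1 := by
    rw [hpeq, div_le_one hN0]
    calc ∑ x, a x ≤ ∑ _x : Fin n → Bool, (1:ℝ) :=
          Finset.sum_le_sum (fun x _ => by rcases ha01 x with h|h <;> rw [h] <;> norm_num)
      _ = 2 ^ n := by simp [Fintype.card_fun]
  -- per-point inequality
  have hpt : ∀ (x : Fin n → Bool) (i : Fin n),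
      ((if Fm x ≠ Fm (flip' x i) then (1:ℝ) else 0)
        - (if Fprev x ≠ Fprev (flip' x i) then (1:ℝ) else 0))
      ≤ a (Function.update x i (σ i)) - a (Function.update x i (!σ i)) := by
    intro x i
    by_cases hx : x i = σ i
    · have e1 : Function.update x i (σ i) = x := by
        rw [← hx]; exact Function.update_eq_self i x
      have e2 : Function.update x i (!σ i) = flip' x i := by rw [flip', hx]
      have hle : fm (flip' x i) ≤ fm x := by
        have h := hσ i x; rwa [e1, e2] at h
      rw [e1, e2]
      have key := edgeKey (fm (flip' x i)) (fm x) (Fprev (flip' x i)) (Fprev x)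
        (hfm _) (hfm _) (hFp _) (hFp _) hle
      rw [← hFmx x, ← hFmx (flip' x i)] at key
      simpa [hadef] using key
    · have hx' : x i = !σ i := by
        cases h1 : σ i <;> cases h2 : x i <;> simp_all
      have e1 : Function.update x i (!σ i) = x := by
        rw [← hx']; exact Function.update_eq_self i x
      have e2 : Function.update x i (σ i) = flip' x i := by
        rw [flip', hx', Bool.not_not]
      have hle : fm x ≤ fm (flip' x i) := by
        have h := hσ i x; rwa [e1, e2] at h
      rw [e1, e2]
      have key := edgeKey (fm x) (fm (flip' x i)) (Fprev x) (Fprev (flip' x i))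
        (hfm _) (hfm _) (hFp _) (hFp _) hle
      rw [← hFmx x, ← hFmx (flip' x i)] at key
      have c1 : (Fm x ≠ Fm (flip' x i)) = (Fm (flip' x i) ≠ Fm x) := by
        simp [ne_comm]
      have c2 : (Fprev x ≠ Fprev (flip' x i)) = (Fprev (flip' x i) ≠ Fprev x) := by
        simp [ne_comm]
      simp only [c1, c2]
      simpa [hadef] using key
  have hχflip : ∀ (i : Fin n) (x : Fin n → Bool),
      (if (flip' x i) i = σ i then (1:ℝ) else -1)
      = -(if x i = σ i then (1:ℝ) else -1) := by
    intro i x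
    rw [flip'_apply]
    cases h1 : x i <;> cases h2 : σ i <;> simp
  have hsum2 : ∀ i : Fin n, ∑ x : Fin n → Bool,
      (a (Function.update x i (σ i)) - a (Function.update x i (!σ i)))
      = 2 * ∑ x : Fin n → Bool, a x * (if x i = σ i then (1:ℝ) else -1) := by
    intro i
    have hpoint : ∀ x : Fin n → Bool,
        a (Function.update x i (σ i)) - a (Function.update x i (!σ i))
        = a x * (if x i = σ i then (1:ℝ) else -1)
          - a (flip' x i) * (if x i = σ i then (1:ℝ) else -1) := by
      intro x
      by_cases hx : x i = σ i
      · have e1 : Function.update x i (σ i) = x := by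
          rw [← hx]; exact Function.update_eq_self i x
        have e2 : Function.update x i (!σ i) = flip' x i := by rw [flip', hx]
        rw [e1, e2, if_pos hx]; ring
      · have hx' : x i = !σ i := by
          cases h1 : σ i <;> cases h2 : x i <;> simp_all
        have e1 : Function.update x i (!σ i) = x := by
          rw [← hx']; exact Function.update_eq_self i x
        have e2 : Function.update x i (σ i) = flip' x i := by
          rw [flip', hx', Bool.not_not]
        rw [e1, e2, if_neg hx]; ring
    have hswap : ∑ x : Fin n → Bool, a (flip' x i) * (if x i = σ i then (1:ℝ) else -1)
        = - ∑ x : Fin n → Bool, a x * (if x i = σ i then (1:ℝ) else -1) := by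
      calc ∑ x : Fin n → Bool, a (flip' x i) * (if x i = σ i then (1:ℝ) else -1)
          = ∑ x : Fin n → Bool,
              a (flip' x i) * -(if (flip' x i) i = σ i then (1:ℝ) else -1) := by
            refine Finset.sum_congr rfl (fun x _ => ?_)
            rw [hχflip i x]; ring
        _ = ∑ x : Fin n → Bool, a x * -(if x i = σ i then (1:ℝ) else -1) :=
            sum_flip i (fun y => a y * -(if y i = σ i then (1:ℝ) else -1))
        _ = ∑ x : Fin n → Bool, -(a x * (if x i = σ i then (1:ℝ) else -1)) :=
            Finset.sum_congr rfl (fun x _ => by ring)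
        _ = - ∑ x : Fin n → Bool, a x * (if x i = σ i then (1:ℝ) else -1) :=
            Finset.sum_neg_distrib _
    calc ∑ x : Fin n → Bool,
          (a (Function.update x i (σ i)) - a (Function.update x i (!σ i)))
        = ∑ x : Fin n → Bool, (a x * (if x i = σ i then (1:ℝ) else -1)
            - a (flip' x i) * (if x i = σ i then (1:ℝ) else -1)) :=
          Finset.sum_congr rfl (fun x _ => hpoint x)
      _ = (∑ x : Fin n → Bool, a x * (if x i = σ i then (1:ℝ) else -1))
            - ∑ x : Fin n → Bool, a (flip' x i) * (if x i = σ i then (1:ℝ) else -1) :=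
          Finset.sum_sub_distrib _ _
      _ = 2 * ∑ x : Fin n → Bool, a x * (if x i = σ i then (1:ℝ) else -1) := by
          rw [hswap]; ring
  set S : Fin n → ℝ :=
    fun i => (∑ x : Fin n → Bool, a x * (if x i = σ i then (1:ℝ) else -1)) / 2 ^ n with hSdef
  have partA : avgSens Fm - avgSens Fprev ≤ 2 * ∑ i, S i := by
    rw [avgSens, avgSens, div_sub_div_same]
    have hstep : (∑ x : Fin n → Bool, ∑ i : Fin n,
          (if Fm x ≠ Fm (flip' x i) then (1:ℝ) else 0))
        - (∑ x : Fin n → Bool, ∑ i : Fin n,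
          (if Fprev x ≠ Fprev (flip' x i) then (1:ℝ) else 0))
        = ∑ x : Fin n → Bool, ∑ i : Fin n,
            ((if Fm x ≠ Fm (flip' x i) then (1:ℝ) else 0)
              - (if Fprev x ≠ Fprev (flip' x i) then (1:ℝ) else 0)) := by
      rw [← Finset.sum_sub_distrib]
      exact Finset.sum_congr rfl fun x _ => (Finset.sum_sub_distrib _ _).symm
    rw [hstep]
    have hb1 : ∑ x : Fin n → Bool, ∑ i : Fin n,
          ((if Fm x ≠ Fm (flip' x i) then (1:ℝ) else 0)
            - (if Fprev x ≠ Fprev (flip' x i) then (1:ℝ) else 0))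
        ≤ ∑ x : Fin n → Bool, ∑ i : Fin n,
            (a (Function.update x i (σ i)) - a (Function.update x i (!σ i))) :=
      Finset.sum_le_sum fun x _ => Finset.sum_le_sum fun i _ => hpt x i
    have hb2 : ∑ x : Fin n → Bool, ∑ i : Fin n,
          (a (Function.update x i (σ i)) - a (Function.update x i (!σ i)))
        = ∑ i : Fin n, 2 * ∑ x : Fin n → Bool, a x * (if x i = σ i then (1:ℝ) else -1) := by
      rw [Finset.sum_comm]
      exact Finset.sum_congr rfl fun i _ => hsum2 i
    calc (∑ x : Fin n → Bool, ∑ i : Fin n,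
            ((if Fm x ≠ Fm (flip' x i) then (1:ℝ) else 0)
              - (if Fprev x ≠ Fprev (flip' x i) then (1:ℝ) else 0))) / 2 ^ n
        ≤ (∑ i : Fin n, 2 * ∑ x : Fin n → Bool,
            a x * (if x i = σ i then (1:ℝ) else -1)) / 2 ^ n := by
          gcongr
          exact hb1.trans (le_of_eq hb2)
      _ = 2 * ∑ i, S i := by
          rw [← Finset.mul_sum, mul_div_assoc, Finset.sum_div]
  -- Cauchy-Schwarz
  have hCS : ∑ i, S i ≤ Real.sqrt n * Real.sqrt (∑ i, S i ^ 2) := by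
    have h2 := Finset.sum_mul_sq_le_sq_mul_sq univ (fun _ => (1:ℝ)) S
    have h3 : (∑ i, S i) ^ 2 ≤ (n : ℝ) * ∑ i, S i ^ 2 := by
      have h4 : ∑ i, (1:ℝ) * S i = ∑ i, S i :=
        Finset.sum_congr rfl fun i _ => one_mul _
      have h5 : ∑ _i : Fin n, (1:ℝ) ^ 2 = (n : ℝ) := by
        simp
      rw [h4, h5] at h2
      exact h2
    calc ∑ i, S i ≤ |∑ i, S i| := le_abs_self _
      _ = Real.sqrt ((∑ i, S i) ^ 2) := (Real.sqrt_sq_eq_abs _).symm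
      _ ≤ Real.sqrt ((n : ℝ) * ∑ i, S i ^ 2) := Real.sqrt_le_sqrt h3
      _ = Real.sqrt n * Real.sqrt (∑ i, S i ^ 2) :=
          Real.sqrt_mul (Nat.cast_nonneg n) _
  by_cases hp : p = 0
  · -- trivial case
    have hsum0 : ∑ x, a x = 0 := by
      have h := hpeq
      rw [hp] at h
      field_simp at h
      linarith [h]
    have hz : ∀ x, a x = 0 := fun x =>
      (Finset.sum_eq_zero_iff_of_nonneg (fun x _ => ha0 x)).1 hsum0 x (Finset.mem_univ x)
    have hzS : ∀ i, S i = 0 := by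
      intro i
      rw [hSdef]
      simp only []
      rw [Finset.sum_eq_zero fun x _ => by rw [hz x]; ring]
      simp
    calc avgSens Fm - avgSens Fprev ≤ 2 * ∑ i, S i := partA
      _ = 0 := by rw [Finset.sum_eq_zero fun i _ => hzS i]; ring
      _ ≤ 100 * p * Real.sqrt (n * Real.log (1 / p)) := by
          rw [hp]
          simp
  · have hppos : 0 < p := lt_of_le_of_ne hp0 (Ne.symm hp)
    have hW4 : Real.sqrt (∑ i, S i ^ 2) ≤ 4 * p * Real.sqrt (Real.log (1 / p)) := by
      by_cases hhalf : p ≤ 1/2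
      · have hl := level1 σ a ha01 (by rw [← hpeq]; exact hppos)
        rw [← hpeq] at hl
        have hl' : Real.sqrt (∑ i, S i ^ 2) ≤ 2 * p * Real.sqrt (1 - Real.log p) := by
          simpa only [hSdef] using hl
        have h2p : (2:ℝ) ≤ 1 / p := by
          rw [le_div_iff₀ hppos]; linarith
        have hlog2 : Real.log 2 ≤ -Real.log p := by
          rw [← Real.log_inv, ← one_div]
          exact Real.log_le_log (by norm_num) h2p
        have hlogpos : 0 < -Real.log p :=
          lt_of_lt_of_le (Real.log_pos (by norm_num)) hlog2
        have h1L : 1 - Real.log p ≤ 4 * (-Real.log p) := by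
          have := Real.log_two_gt_d9
          linarith
        have hs4 : Real.sqrt (1 - Real.log p) ≤ 2 * Real.sqrt (-Real.log p) := by
          have hsq4 : Real.sqrt (4 * (-Real.log p)) = 2 * Real.sqrt (-Real.log p) := by
            rw [Real.sqrt_mul (by norm_num : (0:ℝ) ≤ 4),
              show Real.sqrt 4 = 2 by
                rw [show (4:ℝ) = 2 ^ 2 by norm_num, Real.sqrt_sq (by norm_num)]]
          rw [← hsq4]
          exact Real.sqrt_le_sqrt h1L
        calc Real.sqrt (∑ i, S i ^ 2) ≤ 2 * p * Real.sqrt (1 - Real.log p) := hl'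
          _ ≤ 2 * p * (2 * Real.sqrt (-Real.log p)) :=
              mul_le_mul_of_nonneg_left hs4 (by positivity)
          _ = 4 * p * Real.sqrt (-Real.log p) := by ring
          _ = 4 * p * Real.sqrt (Real.log (1 / p)) := by
              rw [one_div, Real.log_inv]
      · -- p > 1/2 : apply level1 to b = 1 - a
        set b : (Fin n → Bool) → ℝ := fun x => 1 - a x with hbdef
        have hb01 : ∀ x, b x = 0 ∨ b x = 1 := fun x => by
          rcases ha01 x with h|h <;> simp [hbdef, h]
        have hb0 : ∀ x, 0 ≤ b x := by
          intro x; rcases hb01 x with h|h <;> rw [h] <;> norm_num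
        have hsb : (∑ x, b x) = 2 ^ n - ∑ x, a x := by
          rw [hbdef, Finset.sum_sub_distrib]
          congr 1
          simp [Fintype.card_fun]
        have hq : (∑ x, b x) / 2 ^ n = 1 - p := by
          rw [hsb, hpeq]
          field_simp
        have hχ0 : ∀ i : Fin n,
            ∑ x : Fin n → Bool, (if x i = σ i then (1:ℝ) else -1) = 0 := by
          intro i
          have h := sum_flip i (fun y => (if y i = σ i then (1:ℝ) else -1))
          have h2 : ∑ x : Fin n → Bool, (if (flip' x i) i = σ i then (1:ℝ) else -1)
              = - ∑ x : Fin n → Bool, (if x i = σ i then (1:ℝ) else -1) := by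
            rw [← Finset.sum_neg_distrib]
            exact Finset.sum_congr rfl fun x _ => hχflip i x
          rw [h2] at h
          linarith
        have hbS : ∀ i : Fin n,
            (∑ x : Fin n → Bool, b x * (if x i = σ i then (1:ℝ) else -1)) / 2 ^ n
              = - S i := by
          intro i
          have hnum : ∑ x : Fin n → Bool, b x * (if x i = σ i then (1:ℝ) else -1)
              = - ∑ x : Fin n → Bool, a x * (if x i = σ i then (1:ℝ) else -1) := by
            have hsplit : ∑ x : Fin n → Bool, b x * (if x i = σ i then (1:ℝ) else -1)
                = (∑ x : Fin n → Bool, (if x i = σ i then (1:ℝ) else -1))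
                  - ∑ x : Fin n → Bool, a x * (if x i = σ i then (1:ℝ) else -1) := by
              rw [← Finset.sum_sub_distrib]
              refine Finset.sum_congr rfl fun x _ => ?_
              rw [hbdef]; ring
            rw [hsplit, hχ0 i]
            ring
          rw [hnum, neg_div]
        by_cases hq0 : (∑ x, b x) / 2 ^ n = 0
        · have hbsum0 : ∑ x, b x = 0 := by
            field_simp at hq0
            linarith [hq0]
          have hbz : ∀ x, b x = 0 := fun x =>
            (Finset.sum_eq_zero_iff_of_nonneg (fun x _ => hb0 x)).1 hbsum0 x (Finset.mem_univ x)
          have hzS : ∀ i, S i = 0 := by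
            intro i
            have h := hbS i
            rw [Finset.sum_eq_zero (fun x _ => by rw [hbz x]; ring)] at h
            simp at h
            linarith
          rw [Finset.sum_eq_zero fun i _ => by rw [hzS i]; ring, Real.sqrt_zero]
          positivity
        · have hqnn : 0 ≤ (∑ x, b x) / 2 ^ n :=
            div_nonneg (Finset.sum_nonneg fun x _ => hb0 x) hN0.le
          have hqpos : 0 < (∑ x, b x) / 2 ^ n := lt_of_le_of_ne hqnn (Ne.symm hq0)
          have hqpos' : 0 < 1 - p := by rw [← hq]; exact hqpos
          have hl := level1 σ b hb01 hqpos
          rw [hq] at hl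
          have hlhs : (∑ i, ((∑ x : Fin n → Bool,
                b x * (if x i = σ i then (1:ℝ) else -1)) / 2 ^ n) ^ 2)
              = ∑ i, S i ^ 2 :=
            Finset.sum_congr rfl fun i _ => by rw [hbS i, neg_sq]
          rw [hlhs] at hl
          -- hl : sqrt (∑ S²) ≤ 2 (1-p) sqrt(1 - log (1-p))
          have hqlog : (1 - p) * (1 - Real.log (1 - p)) ≤ 1 := by
            have h := Real.log_le_sub_one_of_pos (show (0:ℝ) < (1 - p)⁻¹ by positivity)
            rw [Real.log_inv] at h
            have h2 : (1 - p) * (-Real.log (1 - p)) ≤ (1 - p) * ((1 - p)⁻¹ - 1) :=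
              mul_le_mul_of_nonneg_left h hqpos'.le
            have h3 : (1 - p) * ((1 - p)⁻¹ - 1) = 1 - (1 - p) := by
              field_simp
            nlinarith
          have hlog0 : 0 ≤ 1 - Real.log (1 - p) := by
            have := Real.log_nonpos hqpos'.le (by linarith : 1 - p ≤ 1)
            linarith
          have hA : (1 - p) * Real.sqrt (1 - Real.log (1 - p)) ≤ Real.sqrt (1 - p) := by
            calc (1 - p) * Real.sqrt (1 - Real.log (1 - p))
                = Real.sqrt ((1 - p) ^ 2) * Real.sqrt (1 - Real.log (1 - p)) := by
                  rw [Real.sqrt_sq hqpos'.le]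
              _ = Real.sqrt ((1 - p) ^ 2 * (1 - Real.log (1 - p))) :=
                  (Real.sqrt_mul (sq_nonneg _) _).symm
              _ ≤ Real.sqrt (1 - p) := by
                  apply Real.sqrt_le_sqrt
                  nlinarith [mul_le_mul_of_nonneg_left hqlog hqpos'.le]
          have hB : Real.sqrt (1 - p) ≤ Real.sqrt (-Real.log p) := by
            apply Real.sqrt_le_sqrt
            have := Real.log_le_sub_one_of_pos hppos
            linarith
          have hhalf' : (1:ℝ) ≤ 2 * p := by
            push_neg at hhalf
            linarith
          calc Real.sqrt (∑ i, S i ^ 2)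
              ≤ 2 * (1 - p) * Real.sqrt (1 - Real.log (1 - p)) := hl
            _ = 2 * ((1 - p) * Real.sqrt (1 - Real.log (1 - p))) := by ring
            _ ≤ 2 * Real.sqrt (1 - p) := by linarith [hA]
            _ ≤ 2 * Real.sqrt (-Real.log p) := by linarith [hB]
            _ ≤ 4 * p * Real.sqrt (-Real.log p) := by
                nlinarith [Real.sqrt_nonneg (-Real.log p)]
            _ = 4 * p * Real.sqrt (Real.log (1 / p)) := by
                rw [one_div, Real.log_inv]
    -- final combination
    calc avgSens Fm - avgSens Fprev ≤ 2 * ∑ i, S i := partA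
      _ ≤ 2 * (Real.sqrt n * Real.sqrt (∑ i, S i ^ 2)) := by linarith [hCS]
      _ ≤ 2 * (Real.sqrt n * (4 * p * Real.sqrt (Real.log (1 / p)))) := by
          have h := mul_le_mul_of_nonneg_left hW4 (Real.sqrt_nonneg (n:ℝ))
          nlinarith [h]
      _ = 8 * p * (Real.sqrt n * Real.sqrt (Real.log (1 / p))) := by ring
      _ = 8 * p * Real.sqrt (n * Real.log (1 / p)) := by
          rw [Real.sqrt_mul (Nat.cast_nonneg n)]
      _ ≤ 100 * p * Real.sqrt (n * Real.log (1 / p)) := by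
          nlinarith [Real.sqrt_nonneg ((n:ℝ) * Real.log (1 / p)), hppos.le]
end

section
/- Let f : {±1}^n → {0,1} be the indicator of an intersection of k halfspaces and let ε = 1/m for a positive integer m. Then the noise sensitivity satisfies ns_ε(f) ≤ C · sqrt(ε · log(k)) for an absolute constant C (for k ≥ 2), given the bound as(g) ≤ C' sqrt(m log k) for indicators g of intersections of k halfspaces in m variables. -/
open Real Finset

noncomputable def noiseSens {n : ℕ} (ε : ℝ) (f : (Fin n → Bool) → ℝ) : ℝ :=
  (∑ x : Fin n → Bool, ∑ s : Fin n → Bool,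
    (∏ i : Fin n, if s i then ε else 1 - ε) *
      (if f x ≠ f (fun i => xor (s i) (x i)) then (1 : ℝ) else 0)) / 2 ^ n

noncomputable def walshCoeff {n : ℕ} (f : (Fin n → Bool) → ℝ)
    (S : Finset (Fin n)) : ℝ :=
  expect (fun x => f x * ∏ i ∈ S, sgn (x i))

section Aux

variable {n m : ℕ}

lemma sgn_beq (a b : Bool) : sgn (a == b) = sgn a * sgn b := by
  cases a <;> cases b <;> simp [sgn]

lemma beq_invol (c : Fin n → Bool) :
    Function.Involutive (fun z : Fin n → Bool => fun i => z i == c i) := by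
  intro z; funext i; simp only []; cases z i <;> cases c i <;> rfl

lemma sum_reindex (G : (Fin n → Bool) → ℝ) (c : Fin n → Bool) :
    ∑ z : Fin n → Bool, G (fun i => z i == c i) = ∑ x : Fin n → Bool, G x :=
  Equiv.sum_comp ((beq_invol c).toPerm _) G

lemma key_y (b : Fin m → Bool) (p : Fin m) (β : Fin n → Fin m)
    (z : Fin n → Bool) (i : Fin n) :
    (z i == (flip' b p) (β i)) = xor (decide (β i = p)) (z i == b (β i)) := by
  unfold flip'
  rcases eq_or_ne (β i) p with h | h
  · subst h
    simp only [Function.update_self, decide_eq_true_eq, if_pos rfl]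
    cases z (i) <;> cases b (β i) <;> simp
  · simp [Function.update_of_ne h, h]

lemma count (s : Fin n → Bool) :
    ∑ p : Fin m, ∑ β : Fin n → Fin m,
      (if (fun i => decide (β i = p)) = s then (1:ℝ) else 0)
    = m * ∏ i : Fin n, (if s i then (1:ℝ) else (m:ℝ) - 1) := by
  have h1 : ∀ p : Fin m, ∑ β : Fin n → Fin m,
      (if (fun i => decide (β i = p)) = s then (1:ℝ) else 0)
      = ∏ i : Fin n, (if s i then (1:ℝ) else (m:ℝ) - 1) := by
    intro p
    have h2 : ∀ β : Fin n → Fin m, (if (fun i => decide (β i = p)) = s then (1:ℝ) else 0)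
        = ∏ i : Fin n, (if decide (β i = p) = s i then (1:ℝ) else 0) := by
      intro β
      by_cases h : (fun i => decide (β i = p)) = s
      · rw [if_pos h]
        refine (Finset.prod_eq_one fun i _ => ?_).symm
        rw [if_pos]; exact congrFun h i
      · rw [if_neg h]
        obtain ⟨i, hi⟩ : ∃ i, decide (β i = p) ≠ s i := by
          by_contra hc; push_neg at hc; exact h (funext fun i => hc i)
        refine (Finset.prod_eq_zero (i := i) (mem_univ i) ?_).symm
        exact if_neg hi
    simp_rw [h2]
    have h3 := (Fintype.prod_sum (fun (i : Fin n) (c : Fin m) =>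
      if decide (c = p) = s i then (1:ℝ) else 0)).symm
    rw [h3]
    refine Finset.prod_congr rfl fun i _ => ?_
    cases hsi : s i
    · have : ∀ c : Fin m, (if decide (c = p) = false then (1:ℝ) else 0)
          = 1 - (if p = c then (1:ℝ) else 0) := by
        intro c; rcases eq_or_ne c p with rfl | h
        · simp
        · simp [h, Ne.symm h]
      simp_rw [this]
      rw [Finset.sum_sub_distrib, Finset.sum_const, Finset.sum_ite_eq]
      simp
    · have : ∀ c : Fin m, (if decide (c = p) = true then (1:ℝ) else 0)
          = (if p = c then (1:ℝ) else 0) := by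
        intro c; rcases eq_or_ne c p with rfl | h
        · simp
        · simp [h, Ne.symm h]
      simp_rw [this]
      rw [Finset.sum_ite_eq]
      simp
  simp [h1]

lemma master_aux (hm : 0 < m) (T : (Fin n → Bool) → (Fin n → Bool) → ℝ) :
    (∑ β : Fin n → Fin m, ∑ z : Fin n → Bool, ∑ b : Fin m → Bool, ∑ p : Fin m,
       T (fun i => z i == b (β i)) (fun i => decide (β i = p)))
      / ((m:ℝ)^(n+1) * 2^(n+m))
    = (∑ x : Fin n → Bool, ∑ s : Fin n → Bool,
        (∏ i : Fin n, if s i then (1:ℝ)/m else 1 - 1/m) * T x s) / 2^n := by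
  have hm0 : (m:ℝ) ≠ 0 := Nat.cast_ne_zero.2 hm.ne'
  have step2 : ∀ β : Fin n → Fin m, (∑ z : Fin n → Bool, ∑ b : Fin m → Bool, ∑ p : Fin m,
      T (fun i => z i == b (β i)) (fun i => decide (β i = p)))
      = 2^m * ∑ p : Fin m, ∑ x : Fin n → Bool, T x (fun i => decide (β i = p)) := by
    intro β
    rw [Finset.sum_comm]
    have h : ∀ b : Fin m → Bool, (∑ z : Fin n → Bool, ∑ p : Fin m,
        T (fun i => z i == b (β i)) (fun i => decide (β i = p)))
        = ∑ p : Fin m, ∑ x : Fin n → Bool, T x (fun i => decide (β i = p)) := by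
      intro b
      rw [Finset.sum_comm]
      exact Finset.sum_congr rfl fun p _ =>
        sum_reindex (fun x => T x (fun i => decide (β i = p))) (fun i => b (β i))
    simp_rw [h]
    rw [Finset.sum_const, card_univ]
    simp [nsmul_eq_mul]
  simp_rw [step2]
  rw [← Finset.mul_sum]
  have step3 : (∑ β : Fin n → Fin m, ∑ p : Fin m, ∑ x : Fin n → Bool,
        T x fun i => decide (β i = p))
      = ∑ x : Fin n → Bool, ∑ s : Fin n → Bool,
          (m * ∏ i : Fin n, (if s i then (1:ℝ) else (m:ℝ)-1)) * T x s := by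
    have swap1 : ∀ β : Fin n → Fin m, (∑ p : Fin m, ∑ x : Fin n → Bool,
        T x fun i => decide (β i = p))
        = ∑ x : Fin n → Bool, ∑ p : Fin m, T x fun i => decide (β i = p) :=
      fun β => Finset.sum_comm
    simp_rw [swap1]
    rw [Finset.sum_comm]
    refine Finset.sum_congr rfl fun x _ => ?_
    have expand : ∀ (β : Fin n → Fin m) (p : Fin m),
        (T x fun i => decide (β i = p))
        = ∑ s : Fin n → Bool, (if (fun i => decide (β i = p)) = s then (1:ℝ) else 0) * T x s := by
      intro β p
      have h0 : ∑ s : Fin n → Bool,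
          (if (fun i => decide (β i = p)) = s then (1:ℝ) else 0) * T x s
          = ∑ s : Fin n → Bool,
            (if (fun i => decide (β i = p)) = s then T x s else 0) := by
        refine Finset.sum_congr rfl fun s _ => ?_
        rw [ite_mul, one_mul, zero_mul]
      rw [h0, Finset.sum_ite_eq univ (fun i => decide (β i = p)) (fun s => T x s),
        if_pos (mem_univ _)]
    simp_rw [expand]
    have swap2 : ∀ β : Fin n → Fin m, (∑ p : Fin m, ∑ s : Fin n → Bool,
        (if (fun i => decide (β i = p)) = s then (1:ℝ) else 0) * T x s)
        = ∑ s : Fin n → Bool, ∑ p : Fin m,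
          (if (fun i => decide (β i = p)) = s then (1:ℝ) else 0) * T x s :=
      fun β => Finset.sum_comm
    simp_rw [swap2]
    rw [Finset.sum_comm]
    refine Finset.sum_congr rfl fun s _ => ?_
    have hc : (∑ β : Fin n → Fin m, ∑ p : Fin m,
        (if (fun i => decide (β i = p)) = s then (1:ℝ) else 0))
        = m * ∏ i : Fin n, (if s i then (1:ℝ) else (m:ℝ) - 1) := by
      rw [← count s]; exact Finset.sum_comm
    rw [← hc]
    conv_rhs => rw [Finset.sum_mul]
    refine Finset.sum_congr rfl fun β _ => (Finset.sum_mul _ _ _).symm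
  rw [step3]
  have hW : ∀ s : Fin n → Bool, (∏ i : Fin n, if s i then (1:ℝ)/m else 1 - 1/m)
      = (∏ i : Fin n, if s i then (1:ℝ) else (m:ℝ)-1) / (m:ℝ)^n := by
    intro s
    have h : ∀ i : Fin n, (if s i then (1:ℝ)/m else 1 - 1/m)
        = (if s i then (1:ℝ) else (m:ℝ)-1) / m := by
      intro i
      cases hsi : s i
      · simp only [Bool.false_eq_true, if_false]
        field_simp
      · simp
    simp_rw [h, Finset.prod_div_distrib, Finset.prod_const, card_univ, Fintype.card_fin]
  simp_rw [hW, div_mul_eq_mul_div, ← Finset.sum_div, mul_assoc, ← Finset.mul_sum]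
  rw [pow_add, pow_succ]
  have h2 : (2:ℝ)^n ≠ 0 := by positivity
  have h2m : (2:ℝ)^m ≠ 0 := by positivity
  have hmn : (m:ℝ)^n ≠ 0 := pow_ne_zero _ hm0
  field_simp
  ring

end Aux

theorem stmt_12 (C' : ℝ) (hC' : 0 < C')
    (hyp : ∀ (m k : ℕ) (w : Fin k → Fin m → ℝ) (θ : Fin k → ℝ), 2 ≤ k →
      avgSens (fun b : Fin m → Bool =>
          if ∀ j, θ j ≤ ∑ i : Fin m, w j i * sgn (b i) then (1 : ℝ) else 0) ≤
        C' * Real.sqrt (m * Real.log k))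
    (n k m : ℕ) (hk : 2 ≤ k) (hm : 0 < m)
    (w : Fin k → Fin n → ℝ) (θ : Fin k → ℝ) :
    noiseSens ((1 : ℝ) / m)
        (fun x => if ∀ j, θ j ≤ ∑ i : Fin n, w j i * sgn (x i)
          then (1 : ℝ) else 0) ≤
      C' * Real.sqrt ((1 / m) * Real.log k) := by
  have hm0 : (m:ℝ) ≠ 0 := Nat.cast_ne_zero.2 hm.ne'
  have hmpos : (0:ℝ) < (m:ℝ) := by exact_mod_cast hm
  set f : (Fin n → Bool) → ℝ :=
    fun x => if ∀ j, θ j ≤ ∑ i : Fin n, w j i * sgn (x i) then (1:ℝ) else 0 with hf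
  -- the binned weight vectors and binned functions
  set w' : (Fin n → Fin m) → (Fin n → Bool) → Fin k → Fin m → ℝ :=
    fun β z j p => ∑ i : Fin n, (if β i = p then w j i * sgn (z i) else 0) with hw'
  set g : (Fin n → Fin m) → (Fin n → Bool) → (Fin m → Bool) → ℝ :=
    fun β z => fun b : Fin m → Bool =>
      if ∀ j, θ j ≤ ∑ p : Fin m, w' β z j p * sgn (b p) then (1:ℝ) else 0 with hg
  -- conditioned on bins and z, f of the recombined point is g of the bin signs
  have hfg : ∀ (β : Fin n → Fin m) (z : Fin n → Bool) (b : Fin m → Bool),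
      f (fun i => z i == b (β i)) = g β z b := by
    intro β z b
    have hsum : ∀ j, (∑ i : Fin n, w j i * sgn ((fun i => z i == b (β i)) i))
        = ∑ p : Fin m, w' β z j p * sgn (b p) := by
      intro j
      have h1 : ∀ p : Fin m, w' β z j p * sgn (b p)
          = ∑ i : Fin n, (if β i = p then w j i * sgn (z i) * sgn (b p) else 0) := by
        intro p
        rw [hw']
        simp only []
        rw [Finset.sum_mul]
        refine Finset.sum_congr rfl fun i _ => ?_
        rw [ite_mul, zero_mul]
      simp_rw [h1]
      rw [Finset.sum_comm]
      refine Finset.sum_congr rfl fun i _ => ?_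
      rw [Finset.sum_ite_eq univ (β i) (fun p => w j i * sgn (z i) * sgn (b p)),
        if_pos (mem_univ _)]
      rw [sgn_beq, mul_assoc]
    rw [hf, hg]
    simp only []
    exact if_congr (forall_congr' fun j => by rw [hsum j]) rfl rfl
  -- express the noise sensitivity via the binning construction
  have key := master_aux (m := m) hm
    (fun x s => if f x ≠ f (fun i => xor (s i) (x i)) then (1:ℝ) else 0)
  have hns : noiseSens ((1:ℝ)/m) f
      = (∑ β : Fin n → Fin m, ∑ z : Fin n → Bool, ∑ b : Fin m → Bool, ∑ p : Fin m,
          if g β z b ≠ g β z (flip' b p) then (1:ℝ) else 0)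
        / ((m:ℝ)^(n+1) * 2^(n+m)) := by
    unfold noiseSens
    rw [← key]
    congr 1
    refine Finset.sum_congr rfl fun β _ => Finset.sum_congr rfl fun z _ =>
      Finset.sum_congr rfl fun b _ => Finset.sum_congr rfl fun p _ => ?_
    have hx : (fun i => xor ((fun i => decide (β i = p)) i) ((fun i => z i == b (β i)) i))
        = fun i => z i == (flip' b p) (β i) := by
      funext i
      exact (key_y b p β z i).symm
    rw [hx, hfg β z b, hfg β z (flip' b p)]
  -- each inner double sum is 2^m times an average sensitivity
  have hinner : ∀ (β : Fin n → Fin m) (z : Fin n → Bool),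
      (∑ b : Fin m → Bool, ∑ p : Fin m,
        if g β z b ≠ g β z (flip' b p) then (1:ℝ) else 0)
      = 2^m * avgSens (g β z) := by
    intro β z
    rw [avgSens]
    have : ((2:ℝ)^m) ≠ 0 := by positivity
    field_simp
  -- bound each average sensitivity using the hypothesis
  have hb : ∀ (β : Fin n → Fin m) (z : Fin n → Bool),
      avgSens (g β z) ≤ C' * Real.sqrt (m * Real.log k) :=
    fun β z => hyp m k (w' β z) θ hk
  have hD : (0:ℝ) < (m:ℝ)^(n+1) * 2^(n+m) := by positivity
  have hlog : (0:ℝ) ≤ Real.log k :=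
    Real.log_nonneg (by exact_mod_cast Nat.one_le_of_lt hk)
  have hsqrt : Real.sqrt ((1/(m:ℝ)) * Real.log k) = Real.sqrt ((m:ℝ) * Real.log k) / m := by
    rw [show (1/(m:ℝ)) * Real.log k = ((m:ℝ) * Real.log k) / (m:ℝ)^2 by
      field_simp]
    rw [Real.sqrt_div (by positivity), Real.sqrt_sq hmpos.le]
  have hN : (∑ β : Fin n → Fin m, ∑ z : Fin n → Bool, 2^m * avgSens (g β z))
      ≤ (m:ℝ)^n * 2^n * (2^m * (C' * Real.sqrt ((m:ℝ) * Real.log k))) := by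
    calc (∑ β : Fin n → Fin m, ∑ z : Fin n → Bool, 2^m * avgSens (g β z))
        ≤ ∑ β : Fin n → Fin m, ∑ z : Fin n → Bool,
            2^m * (C' * Real.sqrt ((m:ℝ) * Real.log k)) :=
          Finset.sum_le_sum fun β _ => Finset.sum_le_sum fun z _ =>
            mul_le_mul_of_nonneg_left (hb β z) (by positivity)
      _ = (m:ℝ)^n * 2^n * (2^m * (C' * Real.sqrt ((m:ℝ) * Real.log k))) := by
          rw [Finset.sum_const, Finset.sum_const, card_univ, card_univ]
          simp only [Fintype.card_fun, Fintype.card_fin, Fintype.card_bool,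
            smul_eq_mul, nsmul_eq_mul]
          push_cast
          ring
  rw [hns]
  simp_rw [hinner]
  rw [hsqrt, div_le_iff₀ hD]
  refine le_trans hN (le_of_eq ?_)
  rw [pow_add, pow_succ]
  field_simp
  ring
end

section
/- The binned noise model produces the correct joint distribution: partition [n] into m bins uniformly at random (each coordinate independently assigned a uniform bin), choose z uniform on {±1}^n, choose b uniform on {±1}^m, set x_i = b_{bin(i)} · z_i, and obtain y from x by flipping the sign of all coordinates in one uniformly random bin. Then (x, y) has the same distribution as (x', y') where x' is uniform on {±1}^n and y' is obtained from x' by independently flipping each coordinate with probability 1/m. -/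
open Real Finset

lemma fiber_card {n m : ℕ} (j : Fin m) (s : Fin n → Bool) :
    (Finset.univ.filter fun β : Fin n → Fin m =>
        (fun i => decide (β i = j)) = s).card
      = ∏ i, if s i then 1 else m - 1 := by
  classical
  have h : (Finset.univ.filter fun β : Fin n → Fin m => (fun i => decide (β i = j)) = s)
      = Fintype.piFinset (fun i => Finset.univ.filter fun k : Fin m => decide (k = j) = s i) := by
    ext β
    simp [Fintype.mem_piFinset, funext_iff]
  rw [h, Fintype.card_piFinset]
  refine Finset.prod_congr rfl fun i _ => ?_
  cases hs : s i with
  | true =>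
      have h2 : (Finset.univ.filter fun k : Fin m => decide (k = j) = true) = {j} := by
        ext k; simp
      rw [h2]; simp
  | false =>
      have h2 : (Finset.univ.filter fun k : Fin m => decide (k = j) = false) = Finset.univ.erase j := by
        ext k; simp
      rw [h2]
      simp [Finset.card_erase_of_mem]

lemma count_lemma {n m : ℕ} (j : Fin m) (g : (Fin n → Bool) → ℝ) :
    ∑ β : Fin n → Fin m, g (fun i => decide (β i = j)) =
    ∑ s : Fin n → Bool, (∏ i, if s i then (1 : ℝ) else ((m : ℝ) - 1)) * g s := by
  classical
  have h1 : ∀ β : Fin n → Fin m, g (fun i => decide (β i = j))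
      = ∑ s : Fin n → Bool, if (fun i => decide (β i = j)) = s then g s else 0 := by
    intro β
    rw [Finset.sum_ite_eq]
    simp
  simp_rw [h1]
  rw [Finset.sum_comm]
  refine Finset.sum_congr rfl fun s _ => ?_
  rw [← Finset.sum_filter, Finset.sum_const, nsmul_eq_mul, fiber_card]
  congr 1
  rw [Nat.cast_prod]
  refine Finset.prod_congr rfl fun i _ => ?_
  have hmpos : 0 < m := j.pos
  cases (s i) <;> simp [Nat.cast_sub hmpos]

theorem aux_stmt_13 {n m : ℕ} (hm : 0 < m)
    (φ : (Fin n → Bool) → (Fin n → Bool) → ℝ) :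
    (∑ β : Fin n → Fin m, ∑ z : Fin n → Bool, ∑ b : Fin m → Bool, ∑ j : Fin m,
        φ (fun i => xor (b (β i)) (z i))
          (fun i => if β i = j then !(xor (b (β i)) (z i))
            else xor (b (β i)) (z i))) /
      ((m : ℝ) ^ n * 2 ^ n * 2 ^ m * m) =
    (∑ x : Fin n → Bool, ∑ s : Fin n → Bool,
        (∏ i : Fin n, if s i then (1 : ℝ) / m else 1 - 1 / m) *
          φ x (fun i => xor (s i) (x i))) / 2 ^ n := by
  classical
  have hm' : (m : ℝ) ≠ 0 := Nat.cast_ne_zero.mpr hm.ne'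
  have step1 : ∀ (β : Fin n → Fin m) (b : Fin m → Bool) (j : Fin m),
      (∑ z : Fin n → Bool, φ (fun i => xor (b (β i)) (z i))
          (fun i => if β i = j then !(xor (b (β i)) (z i)) else xor (b (β i)) (z i)))
      = ∑ x : Fin n → Bool, φ x (fun i => xor (decide (β i = j)) (x i)) := by
    intro β b j
    have hinv : Function.Involutive (fun z : Fin n → Bool => fun i => xor (b (β i)) (z i)) := by
      intro z; funext i; simp
    rw [← hinv.bijective.sum_comp
      (fun x => φ x (fun i => xor (decide (β i = j)) (x i)))]
    refine Finset.sum_congr rfl fun z _ => ?_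
    congr 1
    funext i
    by_cases h : β i = j <;> simp [h]
  have hnum : (∑ β : Fin n → Fin m, ∑ z : Fin n → Bool, ∑ b : Fin m → Bool, ∑ j : Fin m,
        φ (fun i => xor (b (β i)) (z i))
          (fun i => if β i = j then !(xor (b (β i)) (z i))
            else xor (b (β i)) (z i)))
      = (2 : ℝ) ^ m * m * ∑ x : Fin n → Bool, ∑ s : Fin n → Bool,
          (∏ i : Fin n, if s i then (1 : ℝ) else (m : ℝ) - 1) *
            φ x (fun i => xor (s i) (x i)) := by
    have h2 : ∀ β : Fin n → Fin m,
        (∑ z : Fin n → Bool, ∑ b : Fin m → Bool, ∑ j : Fin m,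
          φ (fun i => xor (b (β i)) (z i))
            (fun i => if β i = j then !(xor (b (β i)) (z i))
              else xor (b (β i)) (z i)))
        = (2 : ℝ) ^ m * ∑ j : Fin m, ∑ x : Fin n → Bool,
            φ x (fun i => xor (decide (β i = j)) (x i)) := by
      intro β
      rw [Finset.sum_comm]
      have : ∀ b : Fin m → Bool,
          (∑ z : Fin n → Bool, ∑ j : Fin m,
            φ (fun i => xor (b (β i)) (z i))
              (fun i => if β i = j then !(xor (b (β i)) (z i))
                else xor (b (β i)) (z i)))
          = ∑ j : Fin m, ∑ x : Fin n → Bool,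
              φ x (fun i => xor (decide (β i = j)) (x i)) := by
        intro b
        rw [Finset.sum_comm]
        exact Finset.sum_congr rfl fun j _ => step1 β b j
      simp_rw [this]
      rw [Finset.sum_const, Finset.card_univ, Fintype.card_fun, Fintype.card_bool,
        Fintype.card_fin, nsmul_eq_mul]
      push_cast
      ring
    simp_rw [h2]
    rw [← Finset.mul_sum]
    have h3 : ∀ j : Fin m,
        (∑ β : Fin n → Fin m, ∑ x : Fin n → Bool,
          φ x (fun i => xor (decide (β i = j)) (x i)))
        = ∑ x : Fin n → Bool, ∑ s : Fin n → Bool,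
            (∏ i : Fin n, if s i then (1 : ℝ) else (m : ℝ) - 1) *
              φ x (fun i => xor (s i) (x i)) := by
      intro j
      rw [Finset.sum_comm]
      exact Finset.sum_congr rfl fun x _ =>
        count_lemma j (fun s => φ x (fun i => xor (s i) (x i)))
    rw [show (∑ β : Fin n → Fin m, ∑ j : Fin m, ∑ x : Fin n → Bool,
          φ x (fun i => xor (decide (β i = j)) (x i)))
        = ∑ j : Fin m, ∑ β : Fin n → Fin m, ∑ x : Fin n → Bool,
          φ x (fun i => xor (decide (β i = j)) (x i)) from Finset.sum_comm]
    simp_rw [h3]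
    rw [Finset.sum_const, Finset.card_univ, Fintype.card_fin, nsmul_eq_mul]
    ring
  rw [hnum]
  have hW : ∀ s : Fin n → Bool,
      (∏ i : Fin n, if s i then (1 : ℝ) else (m : ℝ) - 1)
      = (m : ℝ) ^ n * ∏ i : Fin n, if s i then (1 : ℝ) / m else 1 - 1 / m := by
    intro s
    have hmn : (m : ℝ) ^ n = ∏ _i : Fin n, (m : ℝ) := by
      rw [Finset.prod_const, Finset.card_univ, Fintype.card_fin]
    rw [hmn, ← Finset.prod_mul_distrib]
    refine Finset.prod_congr rfl fun i _ => ?_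
    cases s i <;> simp <;> field_simp
  simp_rw [hW, mul_assoc, ← Finset.mul_sum]
  have h2m : (2 : ℝ) ^ m ≠ 0 := by positivity
  have hmn : (m : ℝ) ^ n ≠ 0 := by positivity
  field_simp

theorem stmt_13 {n m : ℕ} (hm : 0 < m)
    (φ : (Fin n → Bool) → (Fin n → Bool) → ℝ) :
    (∑ β : Fin n → Fin m, ∑ z : Fin n → Bool, ∑ b : Fin m → Bool, ∑ j : Fin m,
        φ (fun i => xor (b (β i)) (z i))
          (fun i => if β i = j then !(xor (b (β i)) (z i))
            else xor (b (β i)) (z i))) /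
      ((m : ℝ) ^ n * 2 ^ n * 2 ^ m * m) =
    (∑ x : Fin n → Bool, ∑ s : Fin n → Bool,
        (∏ i : Fin n, if s i then (1 : ℝ) / m else 1 - 1 / m) *
          φ x (fun i => xor (s i) (x i))) / 2 ^ n := aux_stmt_13 hm φ
end
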